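/- For all natural numbers n and m, the map from Mon([n],[m]) × ZMod (n+1) to ZM(n,m)/≈, sending a pair (ψ, a) to the ≈-class of the function k ↦ ψ̂(k + ã), where ã ∈ ℤ is any representative of a ∈ ZMod (n+1), is well defined (independent of the choice of representative ã) and is a bijection. That is, every morphism in the cyclic category Λ factors uniquely as a morphism in Δ precomposed with an automorphism of its source. -/

import Mathlib

def InZM (n m : ℕ) (f : ℤ → ℤ) : Prop :=
  Monotone f ∧ ∀ k : ℤ, f (k + (n + 1)) = f k + (m + 1)

abbrev ZM (n m : ℕ) : Type := {f : ℤ → ℤ // InZM n m f}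

def ZMrel (n m : ℕ) (f g : ZM n m) : Prop :=
  ∃ c : ℤ, ∀ k : ℤ, g.1 k = f.1 (k + c * ((n : ℤ) + 1))

def IsExtension (n m : ℕ) (ψ : Fin (n + 1) → Fin (m + 1)) (h : ZM n m) : Prop :=
  ∀ (c : ℤ) (k : Fin (n + 1)),
    h.1 (((k : ℕ) : ℤ) + c * ((n : ℤ) + 1)) = (((ψ k : ℕ) : ℤ)) + c * ((m : ℤ) + 1)

namespace Stmt8

variable {n m : ℕ}

lemma equivZ (f : ZM n m) (k c : ℤ) :
    f.1 (k + c * ((n : ℤ) + 1)) = f.1 k + c * ((m : ℤ) + 1) := by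
  induction c using Int.induction_on with
  | zero => simp
  | succ i ih =>
      have h := f.2.2 (k + (i : ℤ) * ((n : ℤ) + 1))
      rw [show k + ((i : ℤ) + 1) * ((n : ℤ) + 1)
            = k + (i : ℤ) * ((n : ℤ) + 1) + ((n : ℤ) + 1) by ring, h, ih]
      ring
  | pred i ih =>
      have h := f.2.2 (k + (-(i : ℤ) - 1) * ((n : ℤ) + 1))
      rw [show k + (-(i:ℤ) - 1) * ((n:ℤ)+1) + ((n:ℤ)+1) = k + (-(i:ℤ)) * ((n:ℤ)+1) by ring,
        ih] at h
      linarith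

def shift (f : ZM n m) (t : ℤ) : ZM n m :=
  ⟨fun k => f.1 (k + t),
    ⟨fun a b hab => f.2.1 (by omega), fun k => by
      simp only []
      rw [show k + ((n:ℤ) + 1) + t = (k + t) + ((n:ℤ)+1) by ring, f.2.2]⟩⟩

lemma shift_apply (f : ZM n m) (t k : ℤ) : (shift f t).1 k = f.1 (k + t) := rfl

def extFun (ψ : Fin (n+1) → Fin (m+1)) (k : ℤ) : ℤ :=
  ((ψ ⟨(k % ((n:ℤ)+1)).toNat, by
      have h1 : 0 ≤ k % ((n:ℤ)+1) := Int.emod_nonneg k (by positivity)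
      have h2 : k % ((n:ℤ)+1) < (n:ℤ)+1 := Int.emod_lt_of_pos k (by positivity)
      omega⟩ : ℕ) : ℤ) + (k / ((n:ℤ)+1)) * ((m:ℤ)+1)

lemma extFun_spec (ψ : Fin (n+1) → Fin (m+1)) (c : ℤ) (j : Fin (n+1)) :
    extFun ψ (((j : ℕ) : ℤ) + c * ((n:ℤ)+1)) = ((ψ j : ℕ) : ℤ) + c * ((m:ℤ)+1) := by
  have hj0 : (0:ℤ) ≤ ((j : ℕ) : ℤ) := Int.natCast_nonneg _
  have hjn : ((j : ℕ) : ℤ) < (n:ℤ)+1 := by exact_mod_cast j.2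
  have hmod : (((j : ℕ) : ℤ) + c * ((n:ℤ)+1)) % ((n:ℤ)+1) = ((j : ℕ) : ℤ) := by
    rw [Int.add_mul_emod_self_right, Int.emod_eq_of_lt hj0 hjn]
  have hdiv : (((j : ℕ) : ℤ) + c * ((n:ℤ)+1)) / ((n:ℤ)+1) = c := by
    rw [Int.add_mul_ediv_right _ _ (by positivity : ((n:ℤ)+1) ≠ 0),
      Int.ediv_eq_zero_of_lt hj0 hjn, zero_add]
  have hfin : ∀ (hpf : (((j:ℕ):ℤ)).toNat < n+1),
      (⟨(((j:ℕ):ℤ)).toNat, hpf⟩ : Fin (n+1)) = j := fun _ => Fin.ext (by simp)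
  simp only [extFun, hmod, hdiv, hfin]

lemma extFun_mono {ψ : Fin (n+1) → Fin (m+1)} (hψ : Monotone ψ) : Monotone (extFun ψ) := by
  apply monotone_int_of_le_succ
  intro k
  have hpos : (0:ℤ) < (n:ℤ)+1 := by positivity
  set r := k % ((n:ℤ)+1) with hr
  set c := k / ((n:ℤ)+1) with hc
  have hk : r + c * ((n:ℤ)+1) = k := by
    have := Int.emod_add_mul_ediv k ((n:ℤ)+1); rw [mul_comm] at this; exact this
  have h1 : 0 ≤ r := Int.emod_nonneg k (by positivity)
  have h2 : r < (n:ℤ)+1 := Int.emod_lt_of_pos k hpos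
  by_cases hcase : r < (n:ℤ)
  · set j : Fin (n+1) := ⟨r.toNat, by omega⟩
    set j' : Fin (n+1) := ⟨r.toNat + 1, by omega⟩
    have e1 : k = ((j : ℕ) : ℤ) + c * ((n:ℤ)+1) := by
      have hv : ((j : ℕ) : ℤ) = ((r.toNat : ℕ) : ℤ) := rfl
      rw [hv]; omega
    have e2 : k + 1 = ((j' : ℕ) : ℤ) + c * ((n:ℤ)+1) := by
      have hv : ((j' : ℕ) : ℤ) = ((r.toNat + 1 : ℕ) : ℤ) := rfl
      rw [hv]; push_cast; omega
    rw [e2, e1, extFun_spec ψ c j, extFun_spec ψ c j']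
    have : ψ j ≤ ψ j' := hψ (by simp [j, j', Fin.le_def])
    have : ((ψ j : ℕ) : ℤ) ≤ ((ψ j' : ℕ) : ℤ) := by exact_mod_cast this
    linarith
  · have hrn : r = (n:ℤ) := by omega
    set j : Fin (n+1) := ⟨n, by omega⟩
    have e1 : k = ((j : ℕ) : ℤ) + c * ((n:ℤ)+1) := by
      have hv : ((j : ℕ) : ℤ) = (n:ℤ) := by simp [j]
      rw [hv]; omega
    set j0 : Fin (n+1) := ⟨0, by omega⟩
    have e2 : k + 1 = ((j0 : ℕ) : ℤ) + (c+1) * ((n:ℤ)+1) := by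
      have hv : ((j0 : ℕ) : ℤ) = (0:ℤ) := by simp [j0]
      rw [hv]; rw [show ((c:ℤ)+1) * ((n:ℤ)+1) = c * ((n:ℤ)+1) + ((n:ℤ)+1) by ring]; omega
    rw [e2, e1, extFun_spec ψ c j, extFun_spec ψ (c+1) j0]
    have hb : ((ψ j : ℕ) : ℤ) ≤ (m:ℤ) := by
      have := (ψ j).2; omega
    have hb0 : (0:ℤ) ≤ ((ψ j0 : ℕ) : ℤ) := Int.natCast_nonneg _
    nlinarith

def ext (ψ : {ψ : Fin (n + 1) → Fin (m + 1) // Monotone ψ}) : ZM n m :=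
  ⟨extFun ψ.1, ⟨extFun_mono ψ.2, fun k => by
    have h1 : 0 ≤ k % ((n:ℤ)+1) := Int.emod_nonneg k (by positivity)
    have h2 : k % ((n:ℤ)+1) < (n:ℤ)+1 := Int.emod_lt_of_pos k (by positivity)
    set j : Fin (n+1) := ⟨(k % ((n:ℤ)+1)).toNat, by omega⟩
    set d : ℤ := k / ((n:ℤ)+1) with hd
    have e1 : k = ((j : ℕ) : ℤ) + d * ((n:ℤ)+1) := by
      have hv : ((j : ℕ) : ℤ) = (((k % ((n:ℤ)+1)).toNat : ℕ) : ℤ) := rfl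
      rw [hv]
      have := Int.emod_add_mul_ediv k ((n:ℤ)+1); rw [mul_comm, ← hd] at this
      omega
    have e2 : k + ((n:ℤ)+1) = ((j : ℕ) : ℤ) + (d + 1) * ((n:ℤ)+1) := by
      rw [e1]; ring
    have L := extFun_spec ψ.1 (d+1) j
    rw [← e2] at L
    have R := extFun_spec ψ.1 d j
    rw [← e1] at R
    rw [L, R]; ring⟩⟩

lemma isExt_ext (ψ : {ψ : Fin (n + 1) → Fin (m + 1) // Monotone ψ}) :
    IsExtension n m ψ.1 (ext ψ) := fun c j => extFun_spec ψ.1 c j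

lemma isExt_unique (ψ : {ψ : Fin (n + 1) → Fin (m + 1) // Monotone ψ}) (h : ZM n m)
    (hh : IsExtension n m ψ.1 h) : h = ext ψ := by
  apply Subtype.ext
  funext k
  show h.1 k = extFun ψ.1 k
  have h1 : 0 ≤ k % ((n:ℤ)+1) := Int.emod_nonneg k (by positivity)
  have h2 : k % ((n:ℤ)+1) < (n:ℤ)+1 := Int.emod_lt_of_pos k (by positivity)
  set j : Fin (n+1) := ⟨(k % ((n:ℤ)+1)).toNat, by omega⟩
  set d : ℤ := k / ((n:ℤ)+1) with hd
  have e1 : k = ((j : ℕ) : ℤ) + d * ((n:ℤ)+1) := by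
    have hv : ((j : ℕ) : ℤ) = (((k % ((n:ℤ)+1)).toNat : ℕ) : ℤ) := rfl
    rw [hv]
    have := Int.emod_add_mul_ediv k ((n:ℤ)+1); rw [mul_comm, ← hd] at this
    omega
  have L := hh d j
  rw [← e1] at L
  have R := extFun_spec ψ.1 d j
  rw [← e1] at R
  rw [L, R]

lemma zmrel_equiv : Equivalence (ZMrel n m) := by
  constructor
  · intro f; exact ⟨0, fun k => by simp⟩
  · rintro f g ⟨c, hc⟩
    exact ⟨-c, fun k => by rw [hc (k + -c * ((n:ℤ)+1))]; ring_nf⟩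
  · rintro f g h ⟨c1, h1⟩ ⟨c2, h2⟩
    refine ⟨c2 + c1, fun k => ?_⟩
    rw [h2 k, h1 (k + c2 * ((n:ℤ)+1))]; ring_nf

lemma valid_unique (f : ZM n m) {s1 s2 : ℤ} (h10 : 0 ≤ f.1 s1) (h1n : f.1 (s1 + n) ≤ m)
    (h20 : 0 ≤ f.1 s2) (h2n : f.1 (s2 + n) ≤ m) : s1 = s2 := by
  by_contra hne
  rcases lt_or_gt_of_ne hne with hlt | hlt
  · have key := f.2.2 s1
    have hm : f.1 (s1 + ((n:ℤ)+1)) ≤ f.1 (s2 + n) := f.2.1 (by omega)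
    rw [key] at hm
    omega
  · have key := f.2.2 s2
    have hm : f.1 (s2 + ((n:ℤ)+1)) ≤ f.1 (s1 + n) := f.2.1 (by omega)
    rw [key] at hm
    omega

def Phi (n m : ℕ) : ({ψ : Fin (n + 1) → Fin (m + 1) // Monotone ψ} × ZMod (n + 1)) →
    Quot (ZMrel n m) :=
  fun p => Quot.mk (ZMrel n m) (shift (ext p.1) ((p.2.val : ℤ)))

lemma Phi_spec (ψ : {ψ : Fin (n + 1) → Fin (m + 1) // Monotone ψ}) (a : ℤ) (h g : ZM n m)
    (hExt : IsExtension n m ψ.1 h) (hg : ∀ x : ℤ, g.1 x = h.1 (x + a)) :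
    Phi n m (ψ, ((a : ℤ) : ZMod (n + 1))) = Quot.mk (ZMrel n m) g := by
  have hh : h = ext ψ := isExt_unique ψ h hExt
  subst hh
  show Quot.mk (ZMrel n m) (shift (ext ψ) (((a : ZMod (n+1)).val : ℤ))) = _
  apply Quot.sound
  have hv : (((a : ZMod (n+1)).val : ℤ)) = a % ((n:ℤ)+1) := by
    have := ZMod.val_intCast (n := n+1) a
    push_cast at this
    omega
  refine ⟨a / ((n:ℤ)+1), fun k => ?_⟩
  rw [hg k, shift_apply]
  have harg : k + a / ((n:ℤ)+1) * ((n:ℤ)+1) + (((a : ZMod (n+1)).val : ℤ)) = k + a := by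
    have := Int.emod_add_mul_ediv a ((n:ℤ)+1)
    rw [mul_comm] at this
    omega
  rw [harg]

lemma Phi_inj : Function.Injective (Phi n m) := by
  rintro ⟨ψ, a⟩ ⟨ψ', a'⟩ hEq
  have hrel : ZMrel n m (shift (ext ψ) ((a.val : ℤ))) (shift (ext ψ') ((a'.val : ℤ))) := by
    have := Quot.eq.mp hEq
    exact (zmrel_equiv.eqvGen_iff).mp this
  obtain ⟨c, hc⟩ := hrel
  -- hc : ∀ k, (ext ψ').1 (k + a'.val) = (ext ψ).1 (k + c*(n+1) + a.val)
  set F := shift (ext ψ) ((a.val : ℤ)) with hF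
  have hFk : ∀ k, F.1 k = extFun ψ.1 (k + (a.val : ℤ)) := fun k => rfl
  have hF2 : ∀ j : Fin (n+1), F.1 (((j:ℕ):ℤ) - (a'.val : ℤ) + c * ((n:ℤ)+1))
      = ((ψ'.1 j : ℕ) : ℤ) := by
    intro j
    have := hc (((j:ℕ):ℤ) - (a'.val : ℤ))
    rw [shift_apply, shift_apply] at this
    have h2 : (ext ψ').1 (((j:ℕ):ℤ) - (a'.val:ℤ) + (a'.val:ℤ)) = ((ψ'.1 j : ℕ):ℤ) := by
      rw [show ((j:ℕ):ℤ) - (a'.val:ℤ) + (a'.val:ℤ) = ((j:ℕ):ℤ) by ring]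
      have := extFun_spec ψ'.1 0 j
      simp at this; exact this
    rw [h2] at this
    rw [shift_apply]
    rw [show ((j:ℕ):ℤ) - (a'.val:ℤ) + c * ((n:ℤ)+1) + (a.val:ℤ)
        = ((j:ℕ):ℤ) - (a'.val:ℤ) + c * ((n:ℤ)+1) + (a.val:ℤ) from rfl]
    exact this.symm
  have hF1 : ∀ j : Fin (n+1), F.1 (((j:ℕ):ℤ) - (a.val : ℤ)) = ((ψ.1 j : ℕ) : ℤ) := by
    intro j
    rw [shift_apply, show ((j:ℕ):ℤ) - (a.val:ℤ) + (a.val:ℤ) = ((j:ℕ):ℤ) by ring]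
    have := extFun_spec ψ.1 0 j
    simp at this; exact this
  -- valid shifts
  set z : Fin (n+1) := ⟨0, by omega⟩
  set jl : Fin (n+1) := ⟨n, by omega⟩
  have hz : ((z:ℕ):ℤ) = 0 := by simp [z]
  have hjl : ((jl:ℕ):ℤ) = (n:ℤ) := by simp [jl]
  have s1eq : -(a.val:ℤ) = -(a'.val:ℤ) + c * ((n:ℤ)+1) := by
    apply valid_unique F
    · have := hF1 z; rw [hz] at this
      rw [show -(a.val:ℤ) = (0:ℤ) - (a.val:ℤ) by ring, this]
      exact Int.natCast_nonneg _
    · have := hF1 jl; rw [hjl] at this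
      rw [show -(a.val:ℤ) + (n:ℤ) = (n:ℤ) - (a.val:ℤ) by ring, this]
      have := (ψ.1 jl).2; omega
    · have := hF2 z; rw [hz] at this
      rw [show -(a'.val:ℤ) + c * ((n:ℤ)+1) = (0:ℤ) - (a'.val:ℤ) + c * ((n:ℤ)+1) by ring, this]
      exact Int.natCast_nonneg _
    · have := hF2 jl; rw [hjl] at this
      rw [show -(a'.val:ℤ) + c * ((n:ℤ)+1) + (n:ℤ) = (n:ℤ) - (a'.val:ℤ) + c * ((n:ℤ)+1) by ring,
        this]
      have := (ψ'.1 jl).2; omega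
  have hav : a.val < n+1 := a.val_lt
  have hav' : a'.val < n+1 := a'.val_lt
  have hc0 : c = 0 := by
    rcases lt_trichotomy c 0 with hlt | hc0 | hgt
    · have h1 : c ≤ -1 := by omega
      have h2 : c * ((n:ℤ)+1) ≤ (-1) * ((n:ℤ)+1) := by
        apply mul_le_mul_of_nonneg_right h1 (by positivity)
      omega
    · exact hc0
    · have h1 : 1 ≤ c := by omega
      have h2 : 1 * ((n:ℤ)+1) ≤ c * ((n:ℤ)+1) := by
        apply mul_le_mul_of_nonneg_right h1 (by positivity)
      omega
  have hval : (a.val : ℤ) = (a'.val : ℤ) := by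
    rw [hc0] at s1eq; omega
  have haa : a = a' := by
    have : a.val = a'.val := by exact_mod_cast hval
    exact ZMod.val_injective _ this
  have hpsi : ψ = ψ' := by
    apply Subtype.ext
    funext j
    have e1 := hF1 j
    have e2 := hF2 j
    rw [hc0] at e2
    rw [show ((j:ℕ):ℤ) - (a'.val:ℤ) + 0 * ((n:ℤ)+1) = ((j:ℕ):ℤ) - (a.val:ℤ) by
      rw [hval]; ring] at e2
    rw [e1] at e2
    have : (ψ.1 j : ℕ) = (ψ'.1 j : ℕ) := by exact_mod_cast e2
    exact Fin.ext this
  rw [hpsi, haa]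

lemma Phi_surj : Function.Surjective (Phi n m) := by
  intro q
  induction q using Quot.ind with
  | _ f =>
    -- find least s with 0 ≤ f.1 s
    have hinh : ∃ z : ℤ, 0 ≤ f.1 z := by
      set c : ℕ := (f.1 0).natAbs
      refine ⟨0 + (c:ℤ) * ((n:ℤ)+1), ?_⟩
      rw [equivZ f 0 (c:ℤ)]
      have h1 : (c:ℤ) ≤ (c:ℤ) * ((m:ℤ)+1) :=
        le_mul_of_one_le_right (Int.natCast_nonneg c) (by omega)
      have h2 : -(f.1 0) ≤ (c:ℤ) := by omega
      linarith
    have hbdd : ∃ b : ℤ, ∀ z : ℤ, 0 ≤ f.1 z → b ≤ z := by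
      set c : ℕ := (f.1 0).natAbs
      refine ⟨0 + (-((c:ℤ)+1)) * ((n:ℤ)+1), fun z hz => ?_⟩
      by_contra hlt
      push_neg at hlt
      have hmono := f.2.1 (le_of_lt hlt)
      rw [equivZ f 0 (-((c:ℤ)+1))] at hmono
      have h1 : (c:ℤ)+1 ≤ ((c:ℤ)+1) * ((m:ℤ)+1) :=
        le_mul_of_one_le_right (by positivity) (by omega)
      have h2 : f.1 0 ≤ (c:ℤ) := by omega
      nlinarith
    obtain ⟨s, hs, hmin⟩ := Int.exists_least_of_bdd hbdd hinh
    have hsm1 : f.1 (s - 1) < 0 := by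
      by_contra hge
      push_neg at hge
      have := hmin _ hge
      omega
    have hsn : f.1 (s + (n:ℤ)) ≤ (m:ℤ) := by
      have := f.2.2 (s - 1)
      rw [show s - 1 + ((n:ℤ)+1) = s + (n:ℤ) by ring] at this
      omega
    have hbound : ∀ j : Fin (n+1), 0 ≤ f.1 (s + ((j:ℕ):ℤ)) ∧ f.1 (s + ((j:ℕ):ℤ)) ≤ (m:ℤ) := by
      intro j
      have hj : ((j:ℕ):ℤ) ≤ (n:ℤ) := by exact_mod_cast Nat.lt_succ_iff.mp j.2
      have hj0 : (0:ℤ) ≤ ((j:ℕ):ℤ) := Int.natCast_nonneg _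
      constructor
      · calc (0:ℤ) ≤ f.1 s := hs
          _ ≤ f.1 (s + ((j:ℕ):ℤ)) := f.2.1 (by omega)
      · calc f.1 (s + ((j:ℕ):ℤ)) ≤ f.1 (s + (n:ℤ)) := f.2.1 (by omega)
          _ ≤ (m:ℤ) := hsn
    set ψ : Fin (n+1) → Fin (m+1) := fun j => ⟨(f.1 (s + ((j:ℕ):ℤ))).toNat, by
      have := hbound j; omega⟩ with hψdef
    have hψmono : Monotone ψ := by
      intro j j' hj
      simp only [ψ, Fin.mk_le_mk]
      have : f.1 (s + ((j:ℕ):ℤ)) ≤ f.1 (s + ((j':ℕ):ℤ)) := by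
        apply f.2.1
        have : ((j:ℕ):ℤ) ≤ ((j':ℕ):ℤ) := by exact_mod_cast hj
        omega
      omega
    have hExt : IsExtension n m ψ (shift f s) := by
      intro c j
      rw [shift_apply, show ((j:ℕ):ℤ) + c * ((n:ℤ)+1) + s = (s + ((j:ℕ):ℤ)) + c * ((n:ℤ)+1)
        by ring, equivZ]
      have : ((ψ j : ℕ) : ℤ) = f.1 (s + ((j:ℕ):ℤ)) := by
        simp only [ψ]
        have := hbound j
        omega
      omega
    refine ⟨(⟨ψ, hψmono⟩, ((-s : ℤ) : ZMod (n+1))), ?_⟩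
    exact Phi_spec ⟨ψ, hψmono⟩ (-s) (shift f s) f hExt (fun x => by
      rw [shift_apply, show x + -s + s = x by ring])

end Stmt8

theorem stmt_8 (n m : ℕ) :
    ∃ Φ : ({ψ : Fin (n + 1) → Fin (m + 1) // Monotone ψ} × ZMod (n + 1)) →
        Quot (ZMrel n m),
      Function.Bijective Φ ∧
      ∀ (ψ : {ψ : Fin (n + 1) → Fin (m + 1) // Monotone ψ}) (a : ℤ) (h g : ZM n m),
        IsExtension n m ψ.1 h → (∀ x : ℤ, g.1 x = h.1 (x + a)) →
        Φ (ψ, ((a : ℤ) : ZMod (n + 1))) = Quot.mk (ZMrel n m) g := by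
  exact ⟨Stmt8.Phi n m, ⟨Stmt8.Phi_inj, Stmt8.Phi_surj⟩, Stmt8.Phi_spec⟩
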